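/- Let N ≥ 2, α = 1/(N-1), b > 0, and define the sequence b_i by b₀^{N-1} = α/b and the recursion b_{i+1}/(s+i+1)^α = R_b(b_i/(s+i)^α) where R_b(r) = r - b r^N and s > 0 is chosen so that b₀/s^α is in the domain where R_b is increasing and positive. Then for every 0 < β < 1, b_i = b₀(1 + O(i^{-β})) as i → ∞; in particular b_i → b₀. -/

import Mathlib

set_option maxHeartbeats 4000000
open Filter

lemma pow_le_quadratic (m : ℕ) : ∀ t : ℝ, 0 ≤ t → (m : ℝ) * t ≤ 1 →
    (1 + t) ^ m ≤ 1 + (m : ℝ) * t + (m : ℝ) ^ 2 * t ^ 2 := by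
  induction m with
  | zero =>
    intro t ht _
    norm_num
  | succ m ih =>
    intro t ht hmt
    have hmt' : (m : ℝ) * t ≤ 1 := by
      have : (m : ℝ) * t ≤ ((m : ℝ) + 1) * t := by nlinarith
      push_cast at hmt; linarith
    have h1 := ih t ht hmt'
    have h2 : (0:ℝ) ≤ 1 + t := by linarith
    calc (1 + t) ^ (m + 1) = (1 + t) ^ m * (1 + t) := by ring
    _ ≤ (1 + (m : ℝ) * t + (m : ℝ) ^ 2 * t ^ 2) * (1 + t) := by
        apply mul_le_mul_of_nonneg_right h1 h2
    _ ≤ 1 + ((m : ℕ) + 1 : ℝ) * t + (((m : ℕ) : ℝ) + 1) ^ 2 * t ^ 2 := by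
        push_cast at hmt ⊢; nlinarith [sq_nonneg t, mul_nonneg (mul_nonneg (Nat.cast_nonneg m : (0:ℝ) ≤ m) ht) ht]
    _ = 1 + ((m + 1 : ℕ) : ℝ) * t + ((m + 1 : ℕ) : ℝ) ^ 2 * t ^ 2 := by push_cast; ring

lemma bseq_key (N : ℕ) (hN : 2 ≤ N) (b b₀ s : ℝ)
    (hb : 0 < b) (hb₀ : 0 < b₀) (hs : 0 < s)
    (α : ℝ) (hα : α = 1 / ((N : ℝ) - 1))
    (hb₀def : b₀ ^ (N - 1) = α / b)
    (hdom : 0 < b₀ / s ^ α ∧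
      b₀ / s ^ α < ((N : ℝ) * b) ^ (-(1 : ℝ) / ((N : ℝ) - 1)))
    (bseq : ℕ → ℝ) (hbseq0 : bseq 0 = b₀)
    (hbrec : ∀ i : ℕ,
      bseq (i + 1) / (s + (i : ℝ) + 1) ^ α =
        bseq i / (s + (i : ℝ)) ^ α - b * (bseq i / (s + (i : ℝ)) ^ α) ^ N) :
    ∃ M L : ℝ, 0 < M ∧ 0 ≤ L ∧ ∀ n : ℕ, 1 ≤ n →
      |bseq n - b₀| ≤ b₀ * ((M + L * Real.log n) / n) := by
  -- basic numerology
  obtain ⟨m, hmN⟩ : ∃ m : ℕ, N = m + 1 := ⟨N - 1, by omega⟩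
  have hm1 : 1 ≤ m := by omega
  have hmR : (m : ℝ) = (N : ℝ) - 1 := by rw [hmN]; push_cast; ring
  have hm0 : (0 : ℝ) < m := by exact_mod_cast hm1
  have hαm : α = 1 / (m : ℝ) := by rw [hα, hmR]
  have hα0 : 0 < α := by rw [hαm]; positivity
  have hα1 : α ≤ 1 := by
    rw [hαm]
    rw [div_le_one hm0]
    exact_mod_cast hm1
  have hmα : (m : ℝ) * α = 1 := by
    rw [hαm]; field_simp
  have hNR : (0:ℝ) < N := by positivity
  have hNm : N - 1 = m := by omega
  -- the sequence r
  set r : ℕ → ℝ := fun i => bseq i / (s + (i : ℝ)) ^ α with hrdef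
  have hrrec : ∀ i, r (i + 1) = r i - b * r i ^ N := by
    intro i
    have h := hbrec i
    show bseq (i+1) / (s + ((i+1 : ℕ) : ℝ)) ^ α = _
    have hcast : s + ((i+1 : ℕ) : ℝ) = s + (i : ℝ) + 1 := by push_cast; ring
    rw [hcast]
    exact h
  set rmax : ℝ := ((N : ℝ) * b) ^ (-(1 : ℝ) / ((N : ℝ) - 1)) with hrmaxdef
  have hrmaxpos : 0 < rmax := Real.rpow_pos_of_pos (by positivity) _
  have hrmaxpow : b * rmax ^ m = 1 / (N : ℝ) := by
    have h2 : (-(1 : ℝ) / ((N : ℝ) - 1)) * (m : ℝ) = -1 := by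
      rw [← hmR]
      field_simp
    have h1 : rmax ^ m = ((N : ℝ) * b) ^ ((-(1 : ℝ) / ((N : ℝ) - 1)) * (m : ℝ)) := by
      rw [Real.rpow_mul (by positivity), ← Real.rpow_natCast rmax m]
    rw [h1, h2, Real.rpow_neg_one]
    field_simp
  have hr0pos : 0 < r 0 := by
    have := hdom.1
    simp only [hrdef, Nat.cast_zero, add_zero, hbseq0]
    convert this using 2 <;> norm_num
  have hr0lt : r 0 < rmax := by
    have := hdom.2
    simp only [hrdef, Nat.cast_zero, add_zero, hbseq0]
    convert this using 2 <;> norm_num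
  -- positivity and monotone bound for r
  have hri : ∀ i, 0 < r i ∧ r i ≤ r 0 := by
    intro i
    induction i with
    | zero => exact ⟨hr0pos, le_refl _⟩
    | succ i ih =>
      have hx : b * r i ^ m < 1 / (N : ℝ) := by
        calc b * r i ^ m ≤ b * r 0 ^ m := by gcongr; exacts [ih.1.le, ih.2]
        _ < b * rmax ^ m := by gcongr
        _ = 1 / (N : ℝ) := hrmaxpow
      have hxpos : 0 < b * r i ^ m := by
        have := ih.1
        positivity
      have hN1 : 1 / (N : ℝ) ≤ 1 / 2 := by
        apply one_div_le_one_div_of_le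
        · norm_num
        · exact_mod_cast hN
      have heq : r (i + 1) = r i * (1 - b * r i ^ m) := by
        rw [hrrec i, hmN]; ring
      constructor
      · rw [heq]
        apply mul_pos ih.1
        linarith
      · rw [heq]
        nlinarith [ih.1, ih.2]
  have hN1 : 1 / (N : ℝ) ≤ 1 / 2 := by
    apply one_div_le_one_div_of_le
    · norm_num
    · exact_mod_cast hN
  have hXlt : ∀ i, b * r i ^ m < 1 / (N : ℝ) := by
    intro i
    calc b * r i ^ m ≤ b * r 0 ^ m := by gcongr; exacts [(hri i).1.le, (hri i).2]
    _ < b * rmax ^ m := by gcongr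
    _ = 1 / (N : ℝ) := hrmaxpow
  have hXpos : ∀ i, 0 < b * r i ^ m := by
    intro i; have := (hri i).1; positivity
  -- the sequence u
  set u : ℕ → ℝ := fun i => 1 / r i ^ m with hUdef
  have hupos : ∀ i, 0 < u i := by
    intro i; have := (hri i).1
    simp only [hUdef]; positivity
  have huX : ∀ i, u i * (b * r i ^ m) = b := by
    intro i
    have := (hri i).1
    simp only [hUdef]
    field_simp
  have hurel : ∀ i, u (i + 1) = u i * (1 + (b * r i ^ m) / (1 - b * r i ^ m)) ^ m := by
    intro i
    have hx := hXlt i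
    have hxp := hXpos i
    have h1x : 0 < 1 - b * r i ^ m := by
      have h2 : 1 / (N:ℝ) ≤ 1/2 := hN1
      linarith
    have heq : r (i + 1) = r i * (1 - b * r i ^ m) := by
      rw [hrrec i, hmN]; ring
    have hinv : 1 + (b * r i ^ m) / (1 - b * r i ^ m) = 1 / (1 - b * r i ^ m) := by
      field_simp
      ring
    simp only [hUdef, heq, mul_pow, hinv, div_pow, one_pow]
    rw [div_mul_div_comm, one_mul]
  -- lower recursion for u
  have hureclow : ∀ i, u i + (m : ℝ) * b ≤ u (i + 1) := by
    intro i
    have hx := hXlt i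
    have hxp := hXpos i
    have h1x : 0 < 1 - b * r i ^ m := by linarith
    set t : ℝ := (b * r i ^ m) / (1 - b * r i ^ m) with htdef
    have ht0 : 0 ≤ t := by positivity
    have hber : 1 + (m : ℝ) * t ≤ (1 + t) ^ m := one_add_mul_le_pow (by linarith) m
    have htX : b * r i ^ m ≤ t := by
      rw [htdef, le_div_iff₀ h1x]
      nlinarith
    have h := hurel i
    rw [h]
    have e1 : u i * (1 + (m:ℝ) * (b * r i ^ m)) = u i + (m:ℝ) * b := by
      have := huX i
      linear_combination (m : ℝ) * this
    calc u i + (m:ℝ) * b = u i * (1 + (m:ℝ) * (b * r i ^ m)) := e1.symm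
    _ ≤ u i * (1 + (m:ℝ) * t) := by
        apply mul_le_mul_of_nonneg_left _ (hupos i).le
        have : (m:ℝ) * (b * r i ^ m) ≤ (m:ℝ) * t := mul_le_mul_of_nonneg_left htX hm0.le
        linarith
    _ ≤ u i * (1 + t) ^ m := mul_le_mul_of_nonneg_left hber (hupos i).le
  -- upper recursion for u
  set Cc : ℝ := 2 * (m : ℝ) + 4 * (m : ℝ) ^ 2 with hCcdef
  have hCc0 : (0:ℝ) < Cc := by rw [hCcdef]; positivity
  have hurechigh : ∀ i, u (i + 1) ≤ u i + (m : ℝ) * b + Cc * b * (b * r i ^ m) := by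
    intro i
    have hx := hXlt i
    have hxp := hXpos i
    have hxhalf : b * r i ^ m ≤ 1 / 2 := le_trans hx.le hN1
    have h1x : 0 < 1 - b * r i ^ m := by linarith
    set t : ℝ := (b * r i ^ m) / (1 - b * r i ^ m) with htdef
    have ht0 : 0 ≤ t := by positivity
    have hmt : (m : ℝ) * t ≤ 1 := by
      have e : (m:ℝ) * t = ((m:ℝ) * (b * r i ^ m)) / (1 - b * r i ^ m) := by
        rw [htdef]; ring
      rw [e, div_le_one h1x]
      have hNx : ((N:ℝ)) * (b * r i ^ m) < 1 := by
        have := mul_lt_mul_of_pos_left hx hNR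
        rw [mul_one_div] at this
        rw [div_self hNR.ne'] at this
        exact this
      have : ((m:ℝ) + 1) * (b * r i ^ m) < 1 := by
        rw [show ((m:ℝ)+1) = (N:ℝ) by rw [hmR]; ring]
        exact hNx
      linarith
    have hq := pow_le_quadratic m t ht0 hmt
    have ht2 : t ≤ 2 * (b * r i ^ m) := by
      rw [htdef, div_le_iff₀ h1x]
      nlinarith
    have ht1 : t ≤ (b * r i ^ m) + 2 * (b * r i ^ m) ^ 2 := by
      rw [htdef, div_le_iff₀ h1x]
      nlinarith
    have htt : t ^ 2 ≤ 4 * (b * r i ^ m) ^ 2 := by nlinarith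
    have e1 : (m:ℝ) * t ≤ (m:ℝ) * ((b * r i ^ m) + 2 * (b * r i ^ m) ^ 2) :=
      mul_le_mul_of_nonneg_left ht1 hm0.le
    have e2 : (m:ℝ)^2 * t^2 ≤ (m:ℝ)^2 * (4 * (b * r i ^ m) ^ 2) :=
      mul_le_mul_of_nonneg_left htt (by positivity)
    have hqq : (1 + t) ^ m ≤ 1 + (m:ℝ) * (b * r i ^ m) + Cc * (b * r i ^ m) ^ 2 := by
      rw [hCcdef]; nlinarith
    have h := hurel i
    rw [h]
    calc u i * (1 + t) ^ m ≤ u i * (1 + (m:ℝ) * (b * r i ^ m) + Cc * (b * r i ^ m) ^ 2) :=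
          mul_le_mul_of_nonneg_left hqq (hupos i).le
    _ = u i + (m:ℝ) * b + Cc * b * (b * r i ^ m) := by
        have := huX i
        linear_combination ((m:ℝ) + Cc * (b * r i ^ m)) * this
  -- accumulated lower bound
  have hulow : ∀ i : ℕ, u 0 + (m:ℝ) * b * i ≤ u i := by
    intro i
    induction i with
    | zero => simp
    | succ i ih =>
      have := hureclow i
      push_cast
      push_cast at ih
      linarith
  have hu0 : (N:ℝ) * b ≤ u 0 := by
    have h1 : u 0 * (b * r 0 ^ m) = b := huX 0
    have h2 : b * r 0 ^ m < 1 / (N:ℝ) := hXlt 0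
    have h3 : 0 < b * r 0 ^ m := hXpos 0
    have h4 : 0 < u 0 := hupos 0
    have hNx : ((N:ℝ)) * (b * r 0 ^ m) < 1 := by
      have := mul_lt_mul_of_pos_left h2 hNR
      rw [mul_one_div, div_self hNR.ne'] at this
      exact this
    nlinarith
  have hulow' : ∀ i : ℕ, (m:ℝ) * b * ((i:ℝ) + 1) ≤ u i := by
    intro i
    have h1 := hulow i
    have h2 : (m:ℝ) + 1 = (N:ℝ) := by rw [hmR]; ring
    nlinarith [hu0]
  have hXle : ∀ i : ℕ, b * r i ^ m ≤ 1 / ((m:ℝ) * ((i:ℝ) + 1)) := by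
    intro i
    have hh : (m:ℝ) * b * ((i:ℝ)+1) * (b * r i ^ m) ≤ b := by
      calc (m:ℝ) * b * ((i:ℝ)+1) * (b * r i ^ m) ≤ u i * (b * r i ^ m) :=
            mul_le_mul_of_nonneg_right (hulow' i) (hXpos i).le
      _ = b := huX i
    rw [le_div_iff₀ (by positivity)]
    nlinarith [hXpos i]
  -- log lemma
  have hlog : ∀ n : ℕ, 1 ≤ n → 1 / ((n:ℝ) + 1) ≤ Real.log ((n:ℝ) + 1) - Real.log (n:ℝ) := by
    intro n hn
    have hn0 : (0:ℝ) < n := by exact_mod_cast hn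
    have h := Real.log_le_sub_one_of_pos (show (0:ℝ) < (n:ℝ)/((n:ℝ)+1) by positivity)
    rw [Real.log_div hn0.ne' (by positivity)] at h
    have e : (n:ℝ)/((n:ℝ)+1) - 1 = -(1/((n:ℝ)+1)) := by field_simp; ring
    rw [e] at h
    linarith
  -- accumulated upper bound
  have huub : ∀ n : ℕ, 1 ≤ n →
      u n ≤ u 0 + (m:ℝ) * b * n + Cc * b * (1 + Real.log n / m) := by
    clear_value u Cc
    intro n hn
    induction n, hn using Nat.le_induction with
    | base =>
      have h := hurechigh 0
      have hx0 : b * r 0 ^ m ≤ 1 := le_trans (hXlt 0).le (by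
        rw [div_le_one hNR]; exact_mod_cast Nat.one_le_iff_ne_zero.mpr (by omega))
      have hl1 : Real.log ((1:ℕ):ℝ) = 0 := by norm_num
      push_cast
      rw [show Real.log 1 = 0 from Real.log_one]
      have : Cc * b * (b * r 0 ^ m) ≤ Cc * b * 1 :=
        mul_le_mul_of_nonneg_left hx0 (by positivity)
      have e : Cc * b * (1 + 0 / (m:ℝ)) = Cc * b := by ring
      nlinarith
    | succ n hn ih =>
      have h := hurechigh n
      have hx := hXle n
      have hl := hlog n hn
      have hCb0 : (0:ℝ) ≤ Cc * b := by positivity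
      have e1 : b * r n ^ m ≤ (Real.log ((n:ℝ)+1) - Real.log (n:ℝ)) / (m:ℝ) := by
        calc b * r n ^ m ≤ 1 / ((m:ℝ) * ((n:ℝ)+1)) := hx
        _ = (1/((n:ℝ)+1)) / (m:ℝ) := by
            rw [div_div]
            ring_nf
        _ ≤ (Real.log ((n:ℝ)+1) - Real.log (n:ℝ)) / (m:ℝ) := by gcongr
      have e : Cc * b * (b * r n ^ m) ≤ Cc * b * ((Real.log ((n:ℝ)+1) - Real.log (n:ℝ)) / (m:ℝ)) :=
        mul_le_mul_of_nonneg_left e1 hCb0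
      have e2 : Cc * b * ((Real.log ((n:ℝ)+1) - Real.log (n:ℝ)) / (m:ℝ))
          = Cc * b * (1 + Real.log ((n:ℝ)+1) / m) - Cc * b * (1 + Real.log (n:ℝ) / m) := by
        field_simp
        ring
      have e3 : (m:ℝ) * b * ((n:ℝ) + 1) = (m:ℝ) * b * (n:ℝ) + (m:ℝ) * b := by ring
      push_cast
      push_cast at ih
      linarith
  -- expression for b₀
  have hb0m : b₀ ^ m = 1 / ((m:ℝ) * b) := by
    have h := hb₀def
    rw [hNm] at h
    rw [h, hαm, div_div]
  have hb₀eq : b₀ = (1 / ((m:ℝ) * b)) ^ α := by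
    rw [← hb0m, ← Real.rpow_natCast b₀ m, ← Real.rpow_mul hb₀.le, hmα, Real.rpow_one]
  -- expression for bseq
  have hbeq : ∀ n : ℕ, bseq n = ((s + (n:ℝ)) / u n) ^ α := by
    intro n
    have hrpos := (hri n).1
    have hsp : 0 < s + (n:ℝ) := by positivity
    have h1 : bseq n = r n * (s + (n:ℝ)) ^ α := by
      have h : r n = bseq n / (s + (n:ℝ)) ^ α := by rw [hrdef]
      rw [h]
      field_simp
    have h2 : r n = (r n ^ m) ^ α := by
      rw [← Real.rpow_natCast (r n) m, ← Real.rpow_mul hrpos.le, hmα, Real.rpow_one]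
    have h3 : (s + (n:ℝ)) / u n = r n ^ m * (s + (n:ℝ)) := by
      have hrm : (0:ℝ) < r n ^ m := by positivity
      simp only [hUdef]
      rw [div_div_eq_mul_div, div_one]
      ring
    rw [h1, h3, Real.mul_rpow (by positivity) hsp.le, ← h2]
  -- choose the constants
  clear_value r u Cc rmax
  have hmb0 : 0 < (m:ℝ) * b := mul_pos hm0 hb
  have hK'0 : 0 < (u 0 + Cc * b) / ((m:ℝ) * b) :=
    div_pos (by nlinarith [hupos 0, mul_pos hCc0 hb]) hmb0
  refine ⟨s + (u 0 + Cc * b) / ((m:ℝ) * b), Cc / (m:ℝ)^2, by linarith, by positivity, ?_⟩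
  intro n hn
  have hn0 : (0:ℝ) < n := by exact_mod_cast hn
  have hn1 : (1:ℝ) ≤ n := by exact_mod_cast hn
  have hlogn : 0 ≤ Real.log n := Real.log_nonneg hn1
  set K' : ℝ := (u 0 + Cc * b) / ((m:ℝ) * b) with hK'def
  set L' : ℝ := Cc / (m:ℝ)^2 with hL'def
  have hL'0 : 0 ≤ L' := by rw [hL'def]; positivity
  set δ : ℝ := K' + L' * Real.log n with hδdef
  have hδ0 : 0 ≤ δ := by
    rw [hδdef]
    have := mul_nonneg hL'0 hlogn
    linarith
  clear_value K' L' δ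
  -- upper bound
  have hun : (m:ℝ) * b * (n:ℝ) ≤ u n := by
    have h := hulow' n
    have e : (m:ℝ)*b*((n:ℝ)+1) = (m:ℝ)*b*(n:ℝ) + (m:ℝ)*b := by ring
    linarith [hmb0]
  have hupper : bseq n - b₀ ≤ b₀ * (s / n) := by
    have h1 : (s + (n:ℝ)) / u n ≤ 1 / ((m:ℝ) * b) * (1 + s / n) := by
      have e : 1 / ((m:ℝ)*b) * (1 + s/(n:ℝ)) = (s + (n:ℝ))/((m:ℝ)*b*(n:ℝ)) := by
        field_simp
        ring
      rw [e]
      gcongr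
    have hone : (1:ℝ) ≤ 1 + s/(n:ℝ) := by
      have : 0 ≤ s/(n:ℝ) := by positivity
      linarith
    have h2 : bseq n ≤ b₀ * (1 + s/(n:ℝ)) := by
      rw [hbeq n, hb₀eq]
      calc ((s+(n:ℝ))/u n)^α ≤ (1/((m:ℝ)*b) * (1+s/(n:ℝ)))^α := by
            apply Real.rpow_le_rpow _ h1 hα0.le
            exact div_nonneg (by positivity) (hupos n).le
      _ = (1/((m:ℝ)*b))^α * (1+s/(n:ℝ))^α := Real.mul_rpow (by positivity) (by linarith)
      _ ≤ (1/((m:ℝ)*b))^α * (1+s/(n:ℝ)) := by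
            have h3 : (1+s/(n:ℝ))^α ≤ (1+s/(n:ℝ))^(1:ℝ) :=
              Real.rpow_le_rpow_of_exponent_le hone hα1
            rw [Real.rpow_one] at h3
            exact mul_le_mul_of_nonneg_left h3 (by positivity)
    have e : b₀ * (1 + s/(n:ℝ)) = b₀ + b₀ * (s/(n:ℝ)) := by ring
    linarith
  -- lower bound
  have hbpos : 0 < bseq n := by
    rw [hbeq n]
    exact Real.rpow_pos_of_pos (div_pos (by positivity) (hupos n)) _
  have hlowerb : b₀ - bseq n ≤ b₀ * (δ / n) := by
    have huubn : u n ≤ (m:ℝ) * b * ((n:ℝ) + δ) := by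
      have h := huub n hn
      have e : (m:ℝ)*b*((n:ℝ)+δ) = u 0 + (m:ℝ)*b*(n:ℝ) + Cc*b*(1 + Real.log (n:ℝ) / (m:ℝ)) := by
        rw [hδdef, hK'def, hL'def]
        field_simp
        ring
      linarith
    rcases le_or_gt (n:ℝ) δ with hc | hc
    · have h1 : (1:ℝ) ≤ δ / n := (le_div_iff₀ hn0).mpr (by linarith)
      have h2 := mul_le_mul_of_nonneg_left h1 hb₀.le
      rw [mul_one] at h2
      linarith
    · have hδn1 : 0 < 1 - δ/(n:ℝ) := by
        have : δ/(n:ℝ) < 1 := (div_lt_one hn0).mpr hc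
        linarith
      have hδle1 : 1 - δ/(n:ℝ) ≤ 1 := by
        have : 0 ≤ δ/(n:ℝ) := by positivity
        linarith
      have h1 : 1/((m:ℝ)*b) * (1 - δ/(n:ℝ)) ≤ (s + (n:ℝ)) / u n := by
        have hA0 : 0 ≤ 1/((m:ℝ)*b) * (1-δ/(n:ℝ)) := by positivity
        rw [le_div_iff₀ (hupos n)]
        calc 1/((m:ℝ)*b)*(1-δ/(n:ℝ)) * u n
            ≤ 1/((m:ℝ)*b)*(1-δ/(n:ℝ)) * ((m:ℝ)*b*((n:ℝ)+δ)) :=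
              mul_le_mul_of_nonneg_left huubn hA0
        _ = (n:ℝ) - δ^2/(n:ℝ) := by
              field_simp
              ring
        _ ≤ s + (n:ℝ) := by
              have : 0 ≤ δ^2/(n:ℝ) := by positivity
              linarith
      have h2 : b₀ * (1 - δ/(n:ℝ)) ≤ bseq n := by
        rw [hbeq n, hb₀eq]
        have h3 : (1-δ/(n:ℝ)) ≤ (1-δ/(n:ℝ))^α := by
          have h4 := Real.rpow_le_rpow_of_exponent_ge hδn1 hδle1 hα1
          rw [Real.rpow_one] at h4
          exact h4
        calc (1/((m:ℝ)*b))^α * (1-δ/(n:ℝ)) ≤ (1/((m:ℝ)*b))^α * (1-δ/(n:ℝ))^α :=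
              mul_le_mul_of_nonneg_left h3 (by positivity)
        _ = (1/((m:ℝ)*b) * (1-δ/(n:ℝ)))^α := (Real.mul_rpow (by positivity) hδn1.le).symm
        _ ≤ ((s+(n:ℝ))/u n)^α := by
              apply Real.rpow_le_rpow _ h1 hα0.le
              positivity
      have e : b₀*(1-δ/(n:ℝ)) = b₀ - b₀*(δ/(n:ℝ)) := by ring
      linarith
  -- conclude
  rw [abs_sub_le_iff]
  have hfrac : ∀ a c : ℝ, a ≤ c → b₀ * (a / (n:ℝ)) ≤ b₀ * (c / (n:ℝ)) := by
    intro a c hac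
    apply mul_le_mul_of_nonneg_left _ hb₀.le
    gcongr
  constructor
  · calc bseq n - b₀ ≤ b₀ * (s/(n:ℝ)) := hupper
    _ ≤ b₀ * ((s + K' + L' * Real.log (n:ℝ))/(n:ℝ)) := by
        apply hfrac
        have := mul_nonneg hL'0 hlogn
        linarith [hK'0]
  · calc b₀ - bseq n ≤ b₀ * (δ/(n:ℝ)) := hlowerb
    _ ≤ b₀ * ((s + K' + L' * Real.log (n:ℝ))/(n:ℝ)) := by
        apply hfrac
        rw [hδdef]
        linarith

/-- Asymptotics of the bounding sequence `b_i` for the one-dimensional parabolic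
map `R_b(r) = r - b r^N`: for every `0 < β < 1`, `b_i = b₀(1 + O(i^{-β}))`; in
particular `b_i → b₀`. -/
theorem bseq_asymptotics (N : ℕ) (hN : 2 ≤ N) (b b₀ s : ℝ)
    (hb : 0 < b) (hb₀ : 0 < b₀) (hs : 0 < s)
    (α : ℝ) (hα : α = 1 / ((N : ℝ) - 1))
    (hb₀def : b₀ ^ (N - 1) = α / b)
    (hdom : 0 < b₀ / s ^ α ∧
      b₀ / s ^ α < ((N : ℝ) * b) ^ (-(1 : ℝ) / ((N : ℝ) - 1)))
    (bseq : ℕ → ℝ) (hbseq0 : bseq 0 = b₀)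
    (hbrec : ∀ i : ℕ,
      bseq (i + 1) / (s + (i : ℝ) + 1) ^ α =
        bseq i / (s + (i : ℝ)) ^ α - b * (bseq i / (s + (i : ℝ)) ^ α) ^ N) :
    ∀ β : ℝ, 0 < β → β < 1 →
      (∃ C > 0, ∀ i : ℕ, 1 ≤ i → |bseq i - b₀| ≤ C * b₀ * (i : ℝ) ^ (-β)) ∧
      Tendsto bseq atTop (nhds b₀) := by
  obtain ⟨M, L, hM, hL, hkey⟩ :=
    bseq_key N hN b b₀ s hb hb₀ hs α hα hb₀def hdom bseq hbseq0 hbrec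
  have main : ∀ β : ℝ, 0 < β → β < 1 →
      ∃ C > 0, ∀ i : ℕ, 1 ≤ i → |bseq i - b₀| ≤ C * b₀ * (i : ℝ) ^ (-β) := by
    intro β hβ0 hβ1
    have hβ' : 0 < 1 - β := by linarith
    refine ⟨M + L / (1 - β), by positivity, ?_⟩
    intro i hi
    have hi1 : (1:ℝ) ≤ i := by exact_mod_cast hi
    have hi0 : (0:ℝ) < i := by linarith
    have hlog : Real.log i ≤ (i:ℝ) ^ (1 - β) / (1 - β) :=
      Real.log_le_rpow_div hi0.le hβ'
    have hlog0 : 0 ≤ Real.log i := Real.log_nonneg hi1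
    have e1 : (i:ℝ) ^ (1 - β) / (i:ℝ) = (i:ℝ) ^ (-β) := by
      have h := Real.rpow_sub hi0 (1 - β) 1
      rw [Real.rpow_one] at h
      rw [← h]
      congr 1
      ring
    have e2 : M / (i:ℝ) ≤ M * (i:ℝ) ^ (-β) := by
      have h1 : (i:ℝ) ^ (-1:ℝ) ≤ (i:ℝ) ^ (-β) :=
        Real.rpow_le_rpow_of_exponent_le hi1 (by linarith)
      have h2 : M / (i:ℝ) = M * (i:ℝ) ^ (-1:ℝ) := by
        rw [Real.rpow_neg_one]
        ring
      rw [h2]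
      exact mul_le_mul_of_nonneg_left h1 hM.le
    have e3 : L * Real.log i / (i:ℝ) ≤ (L / (1 - β)) * (i:ℝ) ^ (-β) := by
      calc L * Real.log i / (i:ℝ) ≤ L * ((i:ℝ) ^ (1 - β) / (1 - β)) / (i:ℝ) := by
            gcongr
      _ = (L / (1 - β)) * ((i:ℝ) ^ (1 - β) / (i:ℝ)) := by ring
      _ = (L / (1 - β)) * (i:ℝ) ^ (-β) := by rw [e1]
    have h1 : (M + L * Real.log i) / (i:ℝ) ≤ (M + L / (1 - β)) * (i:ℝ) ^ (-β) := by
      calc (M + L * Real.log i) / (i:ℝ) = M / (i:ℝ) + L * Real.log i / (i:ℝ) := by ring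
      _ ≤ M * (i:ℝ) ^ (-β) + (L / (1 - β)) * (i:ℝ) ^ (-β) := add_le_add e2 e3
      _ = (M + L / (1 - β)) * (i:ℝ) ^ (-β) := by ring
    calc |bseq i - b₀| ≤ b₀ * ((M + L * Real.log i) / i) := hkey i hi
    _ ≤ b₀ * ((M + L / (1 - β)) * (i:ℝ) ^ (-β)) := mul_le_mul_of_nonneg_left h1 hb₀.le
    _ = (M + L / (1 - β)) * b₀ * (i:ℝ) ^ (-β) := by ring
  have htend : Tendsto bseq atTop (nhds b₀) := by
    obtain ⟨C, hC, hCb⟩ := main (1/2) (by norm_num) (by norm_num)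
    rw [← tendsto_sub_nhds_zero_iff]
    apply squeeze_zero_norm' (a := fun n : ℕ => C * b₀ * (n:ℝ) ^ (-(1/2:ℝ)))
    · filter_upwards [eventually_ge_atTop 1] with n hn
      simpa [Real.norm_eq_abs] using hCb n hn
    · have h0 : Tendsto (fun n : ℕ => ((n:ℝ)) ^ (-(1/2:ℝ))) atTop (nhds 0) :=
        (tendsto_rpow_neg_atTop (by norm_num)).comp tendsto_natCast_atTop_atTop
      have := h0.const_mul (C * b₀)
      simpa using this
  intro β hβ0 hβ1
  exact ⟨main β hβ0 hβ1, htend⟩
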